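/- Let n ≥ 1, let x_j = cos(jπ/n) be the Chebyshev points, and let f : [−1,1] → ℝ be (n+1)-times continuously differentiable. Let p be the unique polynomial of degree at most n interpolating f at x_0, …, x_n. Then there exists ξ ∈ (−1, 1) such that f'(1) − p'(1) = (f^{(n+1)}(ξ)/(n+1)!) · ∏_{j=1}^{n} (1 − x_j) = (f^{(n+1)}(ξ)/(n+1)!) · (2n/2^{n−1}). -/

import Mathlib

open Set Polynomial Finset



lemma normSq_one_sub_exp (θ : ℝ) :
    Complex.normSq (1 - Complex.exp (θ * Complex.I)) = 2 - 2 * Real.cos θ := by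
  rw [show (1 : ℂ) - Complex.exp (θ * Complex.I) =
      Complex.ofReal (1 - Real.cos θ) + Complex.ofReal (-Real.sin θ) * Complex.I by
    rw [Complex.exp_mul_I, ← Complex.ofReal_cos, ← Complex.ofReal_sin]; push_cast; ring]
  rw [Complex.normSq_add_mul_I]
  nlinarith [Real.sin_sq_add_cos_sq θ]

lemma chebW_prod (n : ℕ) (hn : 1 ≤ n) :
    ∏ j ∈ Finset.Icc 1 n, (1 - Real.cos (j * Real.pi / n)) = 2 * n / 2 ^ (n - 1) := by
  obtain ⟨m, rfl⟩ : ∃ m, n = m + 1 := ⟨n - 1, (Nat.succ_pred_eq_of_pos hn).symm⟩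
  have hm1 : ((m : ℝ) + 1) ≠ 0 := by positivity
  have hm1c : ((m : ℂ) + 1) ≠ 0 := Nat.cast_add_one_ne_zero m
  set a : ℕ → ℝ := fun j => 2 - 2 * Real.cos (j * Real.pi / (m + 1)) with ha
  have hacast : ∀ j : ℕ, a j = 2 - 2 * Real.cos (j * Real.pi / ((m + 1 : ℕ) : ℝ)) := by
    intro j; rw [ha]; push_cast; ring_nf
  set μ : ℂ := Complex.exp (2 * Real.pi * Complex.I / ((2 * (m + 1) : ℕ) : ℂ)) with hμ
  have hprim : IsPrimitiveRoot μ (2 * (m + 1)) := Complex.isPrimitiveRoot_exp _ (by omega)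
  have hprim' : IsPrimitiveRoot μ ((2 * m + 1) + 1) := by
    rw [show 2 * m + 1 + 1 = 2 * (m + 1) by omega]; exact hprim
  have hprod : ∏ k ∈ Finset.range (2 * m + 1), (1 - μ ^ (k + 1)) = ((2 * m + 1 : ℕ) : ℂ) + 1 :=
    hprim'.prod_one_sub_pow_eq_order
  have hpow : ∀ j : ℕ, Complex.normSq (1 - μ ^ j) = a j := by
    intro j
    have hμj : μ ^ j = Complex.exp (((j : ℝ) * Real.pi / (m + 1) : ℝ) * Complex.I) := by
      rw [hμ, ← Complex.exp_nat_mul]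
      congr 1
      push_cast
      field_simp
    rw [hμj, normSq_one_sub_exp, ha]
  have key : ∏ k ∈ Finset.range (2 * m + 1), a (k + 1) = (2 * ((m : ℝ) + 1)) ^ 2 := by
    have h := congrArg Complex.normSq hprod
    rw [map_prod] at h
    simp only [hpow] at h
    rw [h, show ((2 * m + 1 : ℕ) : ℂ) + 1 = Complex.ofReal (2 * ((m : ℝ) + 1)) by push_cast; ring,
      Complex.normSq_ofReal]
    ring
  have hsym : ∀ j : ℕ, j ≤ 2 * (m + 1) → a (2 * (m + 1) - j) = a j := by
    intro j hj
    simp only [ha]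
    congr 2
    have h1 : ((2 * (m + 1) - j : ℕ) : ℝ) = 2 * ((m : ℝ) + 1) - j := by
      rw [Nat.cast_sub hj]; push_cast; ring
    rw [h1, show (2 * ((m : ℝ) + 1) - j) * Real.pi / (m + 1)
        = 2 * Real.pi - (j : ℝ) * Real.pi / (m + 1) by field_simp,
      Real.cos_two_pi_sub]
  set Q : ℝ := ∏ k ∈ Finset.range m, a (k + 1) with hQ
  have hsplit : ∏ k ∈ Finset.range (2 * m + 1), a (k + 1) = Q * a (m + 1) * Q := by
    rw [show 2 * m + 1 = (m + 1) + m by omega, Finset.prod_range_add, Finset.prod_range_succ]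
    congr 1
    have h3 : ∀ k ∈ Finset.range m, a ((m + 1) + k + 1) = a (m - k) := by
      intro k hk
      simp only [Finset.mem_range] at hk
      rw [show (m + 1) + k + 1 = 2 * (m + 1) - (m - k) by omega, hsym _ (by omega)]
    rw [Finset.prod_congr rfl h3]
    calc ∏ k ∈ Finset.range m, a (m - k)
        = ∏ k ∈ Finset.range m, a (m - 1 - k + 1) := by
          apply Finset.prod_congr rfl
          intro k hk
          simp only [Finset.mem_range] at hk
          congr 1; omega
      _ = Q := Finset.prod_range_reflect (fun k => a (k + 1)) m
  have han : a (m + 1) = 4 := by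
    simp only [ha]
    rw [show ((m + 1 : ℕ) : ℝ) * Real.pi / ((m : ℝ) + 1) = Real.pi by push_cast; field_simp,
      Real.cos_pi]
    ring
  have hQn : Q = (m : ℝ) + 1 := by
    have hQnn : 0 ≤ Q := Finset.prod_nonneg fun k _ => by
      simp only [ha]; nlinarith [Real.cos_le_one (((k + 1 : ℕ) : ℝ) * Real.pi / ((m : ℝ) + 1))]
    have h4 : Q * a (m + 1) * Q = (2 * ((m : ℝ) + 1)) ^ 2 := by rw [← hsplit]; exact key
    rw [han] at h4
    nlinarith
  have hfin : ∀ j : ℕ, 1 - Real.cos ((j : ℝ) * Real.pi / ((m + 1 : ℕ) : ℝ)) = a j / 2 := fun j => by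
    rw [hacast]; ring
  calc ∏ j ∈ Finset.Icc 1 (m + 1), (1 - Real.cos ((j : ℝ) * Real.pi / ((m + 1 : ℕ) : ℝ)))
      = ∏ j ∈ Finset.Icc 1 (m + 1), a j / 2 := Finset.prod_congr rfl fun j _ => hfin j
    _ = (∏ j ∈ Finset.Icc 1 (m + 1), a j) / 2 ^ (m + 1) := by
        rw [Finset.prod_div_distrib, Finset.prod_const]
        congr 2
        rw [Nat.card_Icc]
        omega
    _ = (Q * a (m + 1)) / 2 ^ (m + 1) := by
        have e1 : m + 1 + 1 - 1 = m + 1 := by omega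
        have e2 : ∀ k ∈ Finset.range m, a (1 + k) = a (k + 1) := by
          intro k _; rw [add_comm]
        rw [← Finset.Ico_add_one_right_eq_Icc, Finset.prod_Ico_eq_prod_range, e1, Finset.prod_range_succ,
          Finset.prod_congr rfl e2, add_comm 1 m, hQ]
    _ = 2 * ((m + 1 : ℕ) : ℝ) / 2 ^ ((m + 1) - 1) := by
        rw [hQn, han, Nat.add_sub_cancel]
        push_cast
        rw [pow_succ]
        have h2 : (2:ℝ) ^ m ≠ 0 := by positivity
        field_simp
        ring


lemma polyCD (q : Polynomial ℝ) {m : WithTop ℕ∞} : ContDiff ℝ m fun x : ℝ => q.eval x := by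
  induction q using Polynomial.induction_on' with
  | add p q hp hq => simpa [Polynomial.eval_add] using hp.add hq
  | monomial k c =>
      simpa [Polynomial.eval_monomial] using (contDiff_const (c := c)).mul (contDiff_id.pow k)

lemma poly_iterDW (q : Polynomial ℝ) (k : ℕ) {s : Set ℝ} (hs : UniqueDiffOn ℝ s)
    {x : ℝ} (hx : x ∈ s) :
    iteratedDerivWithin k (fun y => q.eval y) s x = (Polynomial.derivative^[k] q).eval x := by
  induction k generalizing q x with
  | zero => simp
  | succ k ih =>
      rw [iteratedDerivWithin_succ']
      have h1 : Set.EqOn (derivWithin (fun y => q.eval y) s)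
          (fun y => (Polynomial.derivative q).eval y) s := by
        intro y hy
        rw [(q.differentiableAt).derivWithin (hs y hy), Polynomial.deriv]
      calc iteratedDerivWithin k (derivWithin (fun y => q.eval y) s) s x
          = iteratedDerivWithin k (fun y => (Polynomial.derivative q).eval y) s x :=
            iteratedDerivWithin_congr h1 hx
        _ = (Polynomial.derivative^[k] (Polynomial.derivative q)).eval x := ih _ hx
        _ = (Polynomial.derivative^[k + 1] q).eval x := by
            rw [Function.iterate_succ_apply]

lemma rolle_step {g : ℝ → ℝ} {m : ℕ} {z : Fin (m + 2) → ℝ} (hz : StrictMono z)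
    (hcont : ContinuousOn g (Set.Icc (z 0) (z (Fin.last (m + 1)))))
    (hg : ∀ i, g (z i) = 0) :
    ∃ y : Fin (m + 1) → ℝ, StrictMono y ∧
      (∀ i, y i ∈ Set.Ioo (z i.castSucc) (z i.succ)) ∧ ∀ i, deriv g (y i) = 0 := by
  have H : ∀ i : Fin (m + 1), ∃ c ∈ Set.Ioo (z i.castSucc) (z i.succ), deriv g c = 0 := by
    intro i
    refine exists_deriv_eq_zero (hz (Fin.castSucc_lt_succ (i := i))) (hcont.mono ?_)
      (by rw [hg, hg])
    apply Set.Icc_subset_Icc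
    · exact hz.monotone (Fin.zero_le _)
    · exact hz.monotone (Fin.le_last _)
  choose y hy1 hy2 using H
  refine ⟨y, ?_, hy1, hy2⟩
  rw [Fin.strictMono_iff_lt_succ]
  intro i
  calc y i.castSucc < z i.castSucc.succ := (hy1 i.castSucc).2
    _ = z i.succ.castSucc := by rw [Fin.succ_castSucc]
    _ < y i.succ := (hy1 i.succ).1

lemma rolle_chain (g : ℝ → ℝ) (m : ℕ) : ∀ (k : ℕ),
    (∀ j, j ≤ k + m + 1 → ContinuousOn (iteratedDerivWithin j g (Set.Icc (-1:ℝ) 1))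
      (Set.Icc (-1:ℝ) 1)) →
    ∀ (z : Fin (m + 2) → ℝ), StrictMono z → (∀ i, z i ∈ Set.Icc (-1:ℝ) 1) →
    (∀ i, iteratedDerivWithin k g (Set.Icc (-1:ℝ) 1) (z i) = 0) →
    ∃ c ∈ Set.Ioo (-1:ℝ) 1, iteratedDerivWithin (k + m + 1) g (Set.Icc (-1:ℝ) 1) c = 0 := by
  induction m with
  | zero =>
      intro k hcont z hz hmem hzero
      obtain ⟨y, -, hymem, hyd⟩ := rolle_step hz
        ((hcont k (by omega)).mono (Set.Icc_subset_Icc (hmem 0).1 (hmem (Fin.last 1)).2)) hzero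
      have hy : y 0 ∈ Set.Ioo (-1:ℝ) 1 := by
        obtain ⟨h1, h2⟩ := hymem 0
        constructor
        · exact lt_of_le_of_lt (hmem _).1 h1
        · exact lt_of_lt_of_le h2 (hmem _).2
      refine ⟨y 0, hy, ?_⟩
      rw [iteratedDerivWithin_succ,
        derivWithin_of_mem_nhds (Icc_mem_nhds hy.1 hy.2)]
      exact hyd 0
  | succ m ih =>
      intro k hcont z hz hmem hzero
      obtain ⟨y, hymono, hymem, hyd⟩ := rolle_step hz
        ((hcont k (by omega)).mono (Set.Icc_subset_Icc (hmem 0).1 (hmem (Fin.last _)).2)) hzero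
      have hyIoo : ∀ i, y i ∈ Set.Ioo (-1:ℝ) 1 := by
        intro i
        obtain ⟨h1, h2⟩ := hymem i
        exact ⟨lt_of_le_of_lt (hmem _).1 h1, lt_of_lt_of_le h2 (hmem _).2⟩
      have hyzero : ∀ i, iteratedDerivWithin (k + 1) g (Set.Icc (-1:ℝ) 1) (y i) = 0 := by
        intro i
        rw [iteratedDerivWithin_succ,
          derivWithin_of_mem_nhds (Icc_mem_nhds (hyIoo i).1 (hyIoo i).2)]
        exact hyd i
      have := ih (k + 1) (fun j hj => hcont j (by omega)) y hymono
        (fun i => Set.mem_Icc_of_Ioo (hyIoo i)) hyzero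
      obtain ⟨c, hc, hc2⟩ := this
      exact ⟨c, hc, by rwa [show k + (m + 1) + 1 = k + 1 + m + 1 by omega]⟩

open Set Polynomial Finset


lemma iter_deriv_add (k : ℕ) (p q : Polynomial ℝ) :
    Polynomial.derivative^[k] (p + q) =
      Polynomial.derivative^[k] p + Polynomial.derivative^[k] q := by
  induction k with
  | zero => simp
  | succ k ih => simp [Function.iterate_succ_apply', ih]

/-- For `f` that is `(n+1)`-times continuously differentiable on `[−1,1]`
and `p` the polynomial of degree at most `n` interpolating `f` at the Chebyshev points
`x_j = cos(jπ/n)`, there is `ξ ∈ (−1,1)` with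
`f'(1) − p'(1) = (f^{(n+1)}(ξ)/(n+1)!)·∏_{j=1}^n (1−x_j)`, and
`∏_{j=1}^n (1−x_j) = 2n/2^{n−1}`. -/
theorem stmt_14 (n : ℕ) (hn : 1 ≤ n) (f : ℝ → ℝ)
    (hf : ContDiffOn ℝ (n + 1) f (Set.Icc (-1 : ℝ) 1))
    (p : Polynomial ℝ) (hdeg : p.degree ≤ n)
    (hinterp : ∀ j ≤ n, p.eval (Real.cos (j * Real.pi / n)) = f (Real.cos (j * Real.pi / n))) :
    ∃ ξ ∈ Set.Ioo (-1 : ℝ) 1,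
      derivWithin f (Set.Icc (-1 : ℝ) 1) 1 - (Polynomial.derivative p).eval 1 =
        iteratedDerivWithin (n + 1) f (Set.Icc (-1 : ℝ) 1) ξ / ((n + 1).factorial : ℝ) *
          ∏ j ∈ Finset.Icc 1 n, (1 - Real.cos (j * Real.pi / n)) ∧
      ∏ j ∈ Finset.Icc 1 n, (1 - Real.cos (j * Real.pi / n)) = 2 * n / 2 ^ (n - 1) := by
  have hpi := Real.pi_pos
  obtain ⟨m, rfl⟩ : ∃ m, n = m + 1 := ⟨n - 1, (Nat.succ_pred_eq_of_pos hn).symm⟩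
  have hI : UniqueDiffOn ℝ (Set.Icc (-1:ℝ) 1) := uniqueDiffOn_Icc (by norm_num)
  have h1I : (1:ℝ) ∈ Set.Icc (-1:ℝ) 1 := by norm_num
  have hNpos : (0:ℝ) < ((m + 1 : ℕ) : ℝ) := by positivity
  set x : ℕ → ℝ := fun j => Real.cos ((j : ℝ) * Real.pi / ((m + 1 : ℕ) : ℝ)) with hxdef
  -- basic facts about the nodes
  have hdec : ∀ a b : ℕ, a < b → b ≤ m + 1 → x b < x a := by
    intro a b hab hb
    apply Real.cos_lt_cos_of_nonneg_of_le_pi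
    · positivity
    · rw [div_le_iff₀ hNpos]
      have : (b : ℝ) ≤ ((m + 1 : ℕ) : ℝ) := by exact_mod_cast hb
      nlinarith
    · have : (a : ℝ) < (b : ℝ) := by exact_mod_cast hab
      gcongr
  have hx0 : x 0 = 1 := by simp [hxdef]
  have hxn : x (m + 1) = -1 := by
    have hpiq : ((m + 1 : ℕ) : ℝ) * Real.pi / ((m + 1 : ℕ) : ℝ) = Real.pi := by
      field_simp
    rw [hxdef]
    simp only
    rw [hpiq, Real.cos_pi]
  have hxmem : ∀ j, j ≤ m + 1 → x j ∈ Set.Icc (-1:ℝ) 1 :=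
    fun j _ => ⟨Real.neg_one_le_cos _, Real.cos_le_one _⟩
  -- the product W
  set W : ℝ := ∏ j ∈ Finset.Icc 1 (m + 1), (1 - x j) with hWdef
  have hWpos : 0 < W := by
    apply Finset.prod_pos
    intro j hj
    rw [Finset.mem_Icc] at hj
    have := hdec 0 j (by omega) hj.2
    rw [hx0] at this
    linarith
  -- the node polynomial
  set q : Polynomial ℝ := ∏ j ∈ Finset.Icc 1 (m + 1), (X - C (x j)) with hqdef
  set ω : Polynomial ℝ := (X - C 1) * q with hωdef
  have hq1 : q.eval 1 = W := by
    rw [hqdef, Polynomial.eval_prod, hWdef]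
    simp
  have hωnodes : ∀ j, j ≤ m + 1 → ω.eval (x j) = 0 := by
    intro j hj
    rcases Nat.eq_zero_or_pos j with rfl | hjpos
    · rw [hωdef, Polynomial.eval_mul, hx0]
      simp
    · rw [hωdef, Polynomial.eval_mul, hqdef, Polynomial.eval_prod]
      have : ∏ i ∈ Finset.Icc 1 (m + 1), ((X - C (x i)).eval (x j)) = 0 :=
        Finset.prod_eq_zero (Finset.mem_Icc.mpr ⟨hjpos, hj⟩) (by simp)
      rw [this, mul_zero]
  have hωderiv1 : (Polynomial.derivative ω).eval 1 = W := by
    rw [hωdef, Polynomial.derivative_mul]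
    simp [hq1]
  have hqmonic : q.Monic := monic_prod_of_monic _ _ fun j _ => monic_X_sub_C _
  have hωmonic : ω.Monic := (monic_X_sub_C 1).mul hqmonic
  have hqdeg : q.natDegree = m + 1 := by
    rw [hqdef, Polynomial.natDegree_prod _ _ fun j _ => (monic_X_sub_C (x j)).ne_zero]
    simp [Polynomial.natDegree_X_sub_C, Nat.card_Icc]
  have hωdeg : ω.natDegree = m + 2 := by
    rw [hωdef, Polynomial.natDegree_mul (monic_X_sub_C (1:ℝ)).ne_zero hqmonic.ne_zero,
      Polynomial.natDegree_X_sub_C, hqdeg]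
    omega
  -- the auxiliary polynomial r and function g
  set lam : ℝ := (derivWithin f (Set.Icc (-1:ℝ) 1) 1 - (Polynomial.derivative p).eval 1) / W
    with hlam
  set r : Polynomial ℝ := p + C lam * ω with hrdef
  set g : ℝ → ℝ := fun y => f y - r.eval y with hgdef
  have hf' : ContDiffOn ℝ ((m + 2 : ℕ) : WithTop ℕ∞) f (Set.Icc (-1:ℝ) 1) := by
    rw [show ((m + 2 : ℕ) : WithTop ℕ∞) = ((m + 1 : ℕ) : WithTop ℕ∞) + 1 from by
      push_cast; ring]
    exact hf
  have hgC : ContDiffOn ℝ ((m + 2 : ℕ) : WithTop ℕ∞) g (Set.Icc (-1:ℝ) 1) :=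
    hf'.sub (polyCD r).contDiffOn
  have hcont : ∀ j, j ≤ 1 + m + 1 →
      ContinuousOn (iteratedDerivWithin j g (Set.Icc (-1:ℝ) 1)) (Set.Icc (-1:ℝ) 1) := by
    intro j hj
    exact hgC.continuousOn_iteratedDerivWithin (by exact_mod_cast by omega : (j : WithTop ℕ∞) ≤ (m + 2 : ℕ)) hI
  -- g vanishes at the nodes
  have hgnodes : ∀ j, j ≤ m + 1 → g (x j) = 0 := by
    intro j hj
    have hint : p.eval (x j) = f (x j) := hinterp j hj
    rw [hgdef]
    simp only [hrdef, Polynomial.eval_add, Polynomial.eval_mul, Polynomial.eval_C]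
    rw [hωnodes j hj, hint]
    ring
  -- derivative of g at 1 vanishes
  have hfd : DifferentiableWithinAt ℝ f (Set.Icc (-1:ℝ) 1) 1 :=
    (hf'.differentiableOn (by simp)) 1 h1I
  have hrD : derivWithin (fun y => r.eval y) (Set.Icc (-1:ℝ) 1) 1 =
      (Polynomial.derivative p).eval 1 + lam * W := by
    rw [(r.differentiableAt).derivWithin (hI 1 h1I), Polynomial.deriv, hrdef]
    simp only [Polynomial.derivative_add, Polynomial.derivative_C_mul, Polynomial.eval_add,
      Polynomial.eval_mul, Polynomial.eval_C, hωderiv1]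
  have hg1 : derivWithin g (Set.Icc (-1:ℝ) 1) 1 = 0 := by
    rw [hgdef]
    rw [derivWithin_fun_sub hfd (r.differentiableAt).differentiableWithinAt, hrD, hlam]
    field_simp
    ring
  -- first Rolle step: zeros of g at the nodes
  set z : Fin (m + 2) → ℝ := fun i => x (m + 1 - i.val) with hzdef
  have hzmono : StrictMono z := by
    intro i j hij
    apply hdec
    · have := j.isLt
      omega
    · omega
  have hz0 : z 0 = -1 := by rw [hzdef]; simpa using hxn
  have hzlast : z (Fin.last (m + 1)) = 1 := by
    rw [hzdef]
    simpa using hx0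
  have hgcont : ContinuousOn g (Set.Icc (z 0) (z (Fin.last (m + 1)))) := by
    rw [hz0, hzlast]
    exact hgC.continuousOn
  obtain ⟨y, hymono, hymem, hyd⟩ := rolle_step hzmono hgcont
    (fun i => hgnodes _ (by omega))
  have hylt1 : ∀ i, y i < 1 := by
    intro i
    calc y i < z i.succ := (hymem i).2
      _ ≤ z (Fin.last (m + 1)) := hzmono.monotone (Fin.le_last _)
      _ = 1 := hzlast
  have hygt : ∀ i, -1 < y i := by
    intro i
    calc (-1:ℝ) = z 0 := hz0.symm
      _ ≤ z i.castSucc := hzmono.monotone (Fin.zero_le _)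
      _ < y i := (hymem i).1
  -- zeros of the first iterated derivative: the y's and the endpoint 1
  set w : Fin (m + 2) → ℝ := Fin.snoc y 1 with hwdef
  have hwcast : ∀ i : Fin (m + 1), w i.castSucc = y i := fun i => by
    rw [hwdef]; exact Fin.snoc_castSucc _ _ _
  have hwlast : w (Fin.last (m + 1)) = 1 := by
    rw [hwdef]; exact Fin.snoc_last _ _
  have hwmono : StrictMono w := by
    rw [Fin.strictMono_iff_lt_succ]
    intro i
    induction i using Fin.lastCases with
    | last =>
        rw [Fin.succ_last, hwlast, hwcast]
        exact hylt1 _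
    | cast i =>
        rw [Fin.succ_castSucc, hwcast, hwcast]
        exact hymono (Fin.castSucc_lt_succ (i := i))
  have hwmem : ∀ i, w i ∈ Set.Icc (-1:ℝ) 1 := by
    intro i
    induction i using Fin.lastCases with
    | last => rw [hwlast]; exact h1I
    | cast i => rw [hwcast]; exact ⟨(hygt _).le, (hylt1 _).le⟩
  have hE1 : ∀ i, iteratedDerivWithin 1 g (Set.Icc (-1:ℝ) 1) (w i) = 0 := by
    intro i
    induction i using Fin.lastCases with
    | last =>
        rw [hwlast, iteratedDerivWithin_one]
        exact hg1
    | cast i =>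
        rw [hwcast, iteratedDerivWithin_one,
          derivWithin_of_mem_nhds (Icc_mem_nhds (hygt _) (hylt1 _))]
        exact hyd _
  -- iterate Rolle
  obtain ⟨ξ, hξ, hξ0⟩ := rolle_chain g m 1 hcont w hwmono hwmem hE1
  refine ⟨ξ, hξ, ?_, chebW_prod (m + 1) (by omega)⟩
  have hξI : ξ ∈ Set.Icc (-1:ℝ) 1 := Set.mem_Icc_of_Ioo hξ
  -- compute the (m+2)-nd derivative of g
  have hsub : iteratedDerivWithin (m + 2) g (Set.Icc (-1:ℝ) 1) ξ =
      iteratedDerivWithin (m + 2) f (Set.Icc (-1:ℝ) 1) ξ -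
        iteratedDerivWithin (m + 2) (fun y => r.eval y) (Set.Icc (-1:ℝ) 1) ξ := by
    have := iteratedDerivWithin_sub hξI hI (hf' ξ hξI) ((polyCD r).contDiffOn ξ hξI)
    exact this
  have hrIter : Polynomial.derivative^[m + 2] r = C (lam * ((m + 2).factorial : ℝ)) := by
    rw [hrdef, iter_deriv_add]
    have h1 : Polynomial.derivative^[m + 2] p = 0 :=
      Polynomial.iterate_derivative_eq_zero
        (lt_of_le_of_lt (Polynomial.natDegree_le_iff_degree_le.mpr (by exact_mod_cast hdeg))
          (by omega))
    have h2 : Polynomial.derivative^[m + 2] (C lam * ω) = C lam * C ((m + 2).factorial : ℝ) := by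
      rw [Polynomial.iterate_derivative_C_mul]
      refine congrArg (C lam * ·) ?_
      have hd0 : (Polynomial.derivative^[m + 2] ω).natDegree ≤ 0 := by
        have := Polynomial.natDegree_iterate_derivative ω (m + 2)
        omega
      rw [Polynomial.eq_C_of_natDegree_le_zero hd0]
      congr 1
      rw [Polynomial.coeff_iterate_derivative]
      simp only [zero_add, Nat.descFactorial_self]
      have : ω.coeff (m + 2) = 1 := by
        have := hωmonic.coeff_natDegree
        rwa [hωdeg] at this
      rw [this, nsmul_eq_mul, mul_one]
    rw [h1, h2, zero_add, ← Polynomial.C_mul]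
  have hriter : iteratedDerivWithin (m + 2) (fun y => r.eval y) (Set.Icc (-1:ℝ) 1) ξ =
      lam * ((m + 2).factorial : ℝ) := by
    rw [poly_iterDW r (m + 2) hI hξI, hrIter]
    simp
  have hfval : iteratedDerivWithin (m + 2) f (Set.Icc (-1:ℝ) 1) ξ =
      lam * ((m + 2).factorial : ℝ) := by
    have h0 : iteratedDerivWithin (m + 2) g (Set.Icc (-1:ℝ) 1) ξ = 0 := by
      rw [show m + 2 = 1 + m + 1 by omega]
      exact hξ0
    rw [h0] at hsub
    rw [hriter] at hsub
    linarith
  have hfac : ((m + 2).factorial : ℝ) ≠ 0 := by positivity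
  have hmm : m + 1 + 1 = m + 2 := by omega
  rw [hmm, hfval, hlam]
  field_simp
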